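/- Let c ≠ 0 be a real number and let x : ℝ → ℝ be twice differentiable with x''(t) + c·x'(t) = 0 for all t. Then there exists a differentiable potential V : ℝ → ℝ such that x''(t) + V'(x(t)) = 0 for all t ∈ ℝ and the function t ↦ (1/2)·x'(t)² + V(x(t)) is constant on ℝ; that is, there exists a conservative one-dimensional mechanical system sharing the given trajectory of the damped system, whose Hamiltonian is constant along that trajectory. -/

import Mathlib

theorem stmt_10 (c : ℝ) (hc : c ≠ 0) (x : ℝ → ℝ)
    (hx : Differentiable ℝ x) (hx' : Differentiable ℝ (deriv x))
    (hode : ∀ t : ℝ, deriv (deriv x) t + c * deriv x t = 0) :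
    ∃ V : ℝ → ℝ, Differentiable ℝ V ∧
      (∀ t : ℝ, deriv (deriv x) t + deriv V (x t) = 0) ∧
      (∃ C : ℝ, ∀ t : ℝ, (1 / 2) * (deriv x t) ^ 2 + V (x t) = C) := by
  set B : ℝ := deriv x 0 + c * x 0 with hB
  -- the function t ↦ x'(t) + c x(t) is constant
  have hg : Differentiable ℝ (fun t => deriv x t + c * x t) :=
    hx'.add (hx.const_mul c)
  have hgd : ∀ t, deriv (fun t => deriv x t + c * x t) t = 0 := by
    intro t
    rw [deriv_fun_add (hx' t) ((hx.const_mul c) t), deriv_const_mul c (hx t)]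
    simpa using hode t
  have hconst : ∀ t : ℝ, deriv x t + c * x t = B := by
    intro t
    have := is_const_of_deriv_eq_zero hg hgd t 0
    simpa [hB] using this
  have hkey : ∀ t : ℝ, deriv x t = B - c * x t := fun t => by
    have := hconst t; linarith
  refine ⟨fun q => c * B * q - c ^ 2 * q ^ 2 / 2, ?_, ?_, ?_⟩
  · fun_prop
  · intro t
    have hV : ∀ q : ℝ, deriv (fun q => c * B * q - c ^ 2 * q ^ 2 / 2) q
        = c * B - c ^ 2 * q := by
      intro q
      have h1 : HasDerivAt (fun q : ℝ => c * B * q - c ^ 2 * q ^ 2 / 2)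
          (c * B * 1 - c ^ 2 * (2 * q ^ 1) / 2) q := by
        exact ((hasDerivAt_id q).const_mul (c * B)).sub
          (((hasDerivAt_pow 2 q).const_mul (c ^ 2)).div_const 2)
      have := h1.deriv
      rw [this]; ring
    have h2 : deriv (deriv x) t = -c * deriv x t := by linarith [hode t]
    rw [hV, h2, hkey t]; ring
  · refine ⟨B ^ 2 / 2, fun t => ?_⟩
    rw [hkey t]; ring
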